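/- Let n ≥ 5 be odd, ϑ := n·cos(π/n)/(1 + cos(π/n)), a := 1/ϑ and b := (n − ϑ)/(2ϑ²). Let u ∈ ℝ^n be the vector with u_0 = a, u_1 = u_{n−1} = b and all other entries 0. Then the n×n circulant matrix circ(u) (with (j,k)-entry u_{(k−j) mod n}) has rank exactly n − 2. -/

import Mathlib

/-- The `n × n` circulant matrix of a vector `u ∈ ℝ^n`: its `(j, k)` entry is
`u ((k - j) mod n)` (subtraction in `Fin n` is modular). -/
def circMat (n : ℕ) (u : Fin n → ℝ) : Matrix (Fin n) (Fin n) ℝ :=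
  fun j k => u (k - j)

open Fin.CommRing in
private lemma circ_row_formula (n : ℕ) [NeZero n] (hn : 5 ≤ n) (a b : ℝ) (u : Fin n → ℝ)
    (hu : ∀ i : Fin n, u i =
      if i.val = 0 then a else if i.val = 1 ∨ i.val = n - 1 then b else 0)
    (x : Fin n → ℝ) (j : Fin n) :
    (circMat n u).mulVec x j = a * x j + b * x (j + 1) + b * x (j - 1) := by
  have h1 : (1 : Fin n).val = 1 := by
    rw [Fin.val_one']; exact Nat.mod_eq_of_lt (by omega)
  have hneg1 : (-1 : Fin n).val = n - 1 := by
    have h : (-1 : Fin n) = 0 - 1 := by ring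
    rw [h, Fin.sub_def]
    simp only [Fin.val_zero, Nat.zero_add, h1]
    exact Nat.mod_eq_of_lt (by omega)
  have h10 : (1 : Fin n) ≠ 0 := by
    intro h; have := congrArg Fin.val h; rw [h1] at this; simp at this
  have h1n1 : (1 : Fin n) ≠ -1 := by
    intro h; have := congrArg Fin.val h; rw [h1, hneg1] at this; omega
  have e0 : ∀ i : Fin n, (i.val = 0) ↔ (i = 0) := fun i => by
    rw [Fin.ext_iff, Fin.val_zero]
  have e1 : ∀ i : Fin n, (i.val = 1) ↔ (i = 1) := fun i => by
    rw [Fin.ext_iff, h1]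
  have e2 : ∀ i : Fin n, (i.val = n - 1) ↔ (i = -1) := fun i => by
    rw [Fin.ext_iff, hneg1]
  have hu' : ∀ i : Fin n, u i = if i = 0 then a else if i = 1 ∨ i = -1 then b else 0 := by
    intro i
    rw [hu i]
    simp only [e0, e1, e2]
  have hterm : ∀ k : Fin n, u (k - j) * x k =
      (if k = j then a * x j else 0) +
      ((if k = j + 1 then b * x (j + 1) else 0) + (if k = j - 1 then b * x (j - 1) else 0)) := by
    intro k
    rw [hu' (k - j)]
    by_cases hk0 : k = j
    · subst hk0
      rw [sub_self, if_pos rfl, if_pos rfl]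
      have n1 : k ≠ k + 1 := fun h => h10 (by simpa using (add_eq_left.mp h.symm))
      have n2 : k ≠ k - 1 := fun h => h10 (sub_eq_self.mp h.symm)
      rw [if_neg n1, if_neg n2]
      ring
    · rw [if_neg (fun h : k - j = 0 => hk0 (sub_eq_zero.mp h)), if_neg hk0]
      by_cases hk1 : k = j + 1
      · have hd : k - j = 1 := by rw [hk1]; ring
        have n2 : k ≠ j - 1 := by
          intro h
          apply h1n1
          have h2 : j + 1 = j - 1 := hk1.symm.trans h
          linear_combination h2
        rw [if_pos (Or.inl hd), if_pos hk1, if_neg n2, hk1]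
        ring
      · by_cases hk2 : k = j - 1
        · have hd : k - j = -1 := by rw [hk2]; ring
          rw [if_pos (Or.inr hd), if_pos hk2, if_neg hk1, hk2]
          ring
        · have nOr : ¬ (k - j = 1 ∨ k - j = -1) := by
            rintro (h | h)
            · exact hk1 (by linear_combination h)
            · exact hk2 (by linear_combination h)
          rw [if_neg nOr, if_neg hk1, if_neg hk2]
          ring
  show (∑ k : Fin n, u (k - j) * x k) = _
  rw [Finset.sum_congr rfl (fun k _ => hterm k), Finset.sum_add_distrib,
    Finset.sum_add_distrib, Finset.sum_ite_eq' Finset.univ j (fun _ => a * x j),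
    Finset.sum_ite_eq' Finset.univ (j + 1) (fun _ => b * x (j + 1)),
    Finset.sum_ite_eq' Finset.univ (j - 1) (fun _ => b * x (j - 1))]
  simp only [Finset.mem_univ, if_pos]
  ring

/-- Let `n ≥ 5` be odd, `ϑ = n·cos(π/n)/(1 + cos(π/n))`, `a = 1/ϑ`, `b = (n - ϑ)/(2ϑ²)`, and
let `u ∈ ℝ^n` have `u 0 = a`, `u 1 = u (n-1) = b` and all other entries `0`.  Then the
circulant matrix `circ(u)` has rank exactly `n - 2`. -/
theorem circulant_rank_eq (n : ℕ) (hodd : Odd n) (hn : 5 ≤ n)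
    (θ a b : ℝ)
    (hθ : θ = n * Real.cos (Real.pi / n) / (1 + Real.cos (Real.pi / n)))
    (ha : a = 1 / θ)
    (hb : b = (n - θ) / (2 * θ ^ 2))
    (u : Fin n → ℝ)
    (hu : ∀ i : Fin n, u i =
      if i.val = 0 then a else if i.val = 1 ∨ i.val = n - 1 then b else 0) :
    (circMat n u).rank = n - 2 := by
  haveI : NeZero n := ⟨by omega⟩
  have hπ := Real.pi_pos
  have hnR : (5:ℝ) ≤ n := by exact_mod_cast hn
  have hn0 : (n:ℝ) ≠ 0 := by linarith
  have hfrac1 : 0 < Real.pi / n := by positivity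
  have hfrac2 : Real.pi / n < Real.pi / 2 := by
    apply div_lt_div_of_pos_left hπ (by norm_num) ?_
    linarith
  set c := Real.cos (Real.pi / n) with hc
  set s := Real.sin (Real.pi / n) with hs
  have hcpos : 0 < c := Real.cos_pos_of_mem_Ioo ⟨by linarith, hfrac2⟩
  have hspos : 0 < s := Real.sin_pos_of_pos_of_lt_pi hfrac1 (by linarith)
  have hsne : s ≠ 0 := ne_of_gt hspos
  have h1c : (0:ℝ) < 1 + c := by linarith
  have hkey : θ * (1 + c) = n * c := by rw [hθ]; field_simp
  have hθpos : 0 < θ := by rw [hθ]; positivity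
  have hθne : θ ≠ 0 := ne_of_gt hθpos
  have hnθ : ((n:ℝ) - θ) * (1 + c) = n := by linear_combination (-1 : ℝ) * hkey
  have hnθpos : 0 < (n:ℝ) - θ := by nlinarith
  have hbpos : 0 < b := by rw [hb]; positivity
  have hbne : b ≠ 0 := ne_of_gt hbpos
  have hab : a = 2 * b * c := by
    rw [ha, hb]
    rw [div_eq_iff hθne] at *
    field_simp
    ring_nf
    nlinarith [hkey, sq_nonneg θ]
  -- trigonometry
  set θ₀ := Real.pi - Real.pi / n with hθ₀
  have hcosθ₀ : Real.cos θ₀ = -c := Real.cos_pi_sub _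
  obtain ⟨m, hm⟩ := hodd
  have hθ₀n : θ₀ * n = (m:ℤ) * (2 * Real.pi) := by
    rw [hθ₀, sub_mul, div_mul_cancel₀ _ hn0, hm]
    push_cast
    ring
  have hpercos : ∀ t : ℝ, Real.cos (θ₀ * (t + n)) = Real.cos (θ₀ * t) := by
    intro t; rw [mul_add, hθ₀n, Real.cos_add_int_mul_two_pi]
  have hpersin : ∀ t : ℝ, Real.sin (θ₀ * (t + n)) = Real.sin (θ₀ * t) := by
    intro t; rw [mul_add, hθ₀n, Real.sin_add_int_mul_two_pi]
  have h1 : (1 : Fin n).val = 1 := by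
    rw [Fin.val_one']; exact Nat.mod_eq_of_lt (by omega)
  -- shift lemmas for sampled periodic functions
  have hshift : ∀ f : ℝ → ℝ, (∀ t : ℝ, f (θ₀ * (t + n)) = f (θ₀ * t)) →
      ∀ j : Fin n, (fun k : Fin n => f (θ₀ * k.val)) (j + 1) = f (θ₀ * (j.val + 1))
        ∧ (fun k : Fin n => f (θ₀ * k.val)) (j - 1) = f (θ₀ * ((j.val:ℝ) - 1)) := by
    intro f hf j
    constructor
    · show f (θ₀ * ((j + 1 : Fin n).val : ℝ)) = _
      have hv : (j + 1 : Fin n).val = (j.val + 1) % n := by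
        rw [Fin.add_def, h1]
      by_cases hj : j.val + 1 = n
      · have hz : (j + 1 : Fin n).val = 0 := by rw [hv, hj, Nat.mod_self]
        rw [hz]
        have e : ((j.val : ℝ) + 1) = 0 + n := by
          push_cast [← hj]; ring
        rw [e, hf 0]
        norm_num
      · have hz : (j + 1 : Fin n).val = j.val + 1 := by
          rw [hv]; exact Nat.mod_eq_of_lt (by omega)
        rw [hz]; push_cast; ring_nf
    · show f (θ₀ * ((j - 1 : Fin n).val : ℝ)) = _
      have hv : (j - 1 : Fin n).val = (n - 1 + j.val) % n := by
        rw [Fin.sub_def, h1]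
      by_cases hj : j.val = 0
      · have hz : (j - 1 : Fin n).val = n - 1 := by
          rw [hv, hj, Nat.add_zero]; exact Nat.mod_eq_of_lt (by omega)
        rw [hz]
        have e : (((n - 1 : ℕ) : ℝ)) = -1 + n := by
          have h1n : (1:ℕ) ≤ n := by omega
          push_cast [h1n]; ring
        rw [e, hf (-1), hj]
        norm_num
      · have hz : (j - 1 : Fin n).val = j.val - 1 := by
          rw [hv]
          have e : n - 1 + j.val = n + (j.val - 1) := by omega
          rw [e, Nat.add_mod_left]
          exact Nat.mod_eq_of_lt (by omega)
        rw [hz]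
        have e : ((j.val - 1 : ℕ) : ℝ) = (j.val : ℝ) - 1 := by
          have h1j : (1:ℕ) ≤ j.val := by omega
          push_cast [h1j]; ring
        rw [e]
  -- the two kernel vectors
  set v : Fin n → ℝ := fun k => Real.cos (θ₀ * k.val) with hv
  set w : Fin n → ℝ := fun k => Real.sin (θ₀ * k.val) with hw
  set M := circMat n u with hM
  set K := LinearMap.ker M.mulVecLin with hK
  have hmemK : ∀ x : Fin n → ℝ,
      x ∈ K ↔ ∀ j : Fin n, a * x j + b * x (j + 1) + b * x (j - 1) = 0 := by
    intro x
    rw [LinearMap.mem_ker]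
    constructor
    · intro h j
      have := congrFun h j
      rw [Matrix.mulVecLin_apply] at this
      rw [← circ_row_formula n hn a b u hu x j]
      exact this
    · intro h
      funext j
      rw [Matrix.mulVecLin_apply]
      show M.mulVec x j = 0
      rw [circ_row_formula n hn a b u hu x j]
      exact h j
  have hvK : v ∈ K := by
    rw [hmemK]
    intro j
    have hsh := hshift Real.cos hpercos j
    show a * Real.cos (θ₀ * j.val) + b * v (j + 1) + b * v (j - 1) = 0
    rw [show v (j+1) = (fun k : Fin n => Real.cos (θ₀ * k.val)) (j + 1) from rfl, hsh.1,
      show v (j-1) = (fun k : Fin n => Real.cos (θ₀ * k.val)) (j - 1) from rfl, hsh.2]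
    have c1 : Real.cos (θ₀ * ((j.val:ℝ) + 1)) =
        Real.cos (θ₀ * j.val) * Real.cos θ₀ - Real.sin (θ₀ * j.val) * Real.sin θ₀ := by
      rw [show θ₀ * ((j.val:ℝ) + 1) = θ₀ * j.val + θ₀ by ring, Real.cos_add]
    have c2 : Real.cos (θ₀ * ((j.val:ℝ) - 1)) =
        Real.cos (θ₀ * j.val) * Real.cos θ₀ + Real.sin (θ₀ * j.val) * Real.sin θ₀ := by
      rw [show θ₀ * ((j.val:ℝ) - 1) = θ₀ * j.val - θ₀ by ring, Real.cos_sub]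
    rw [c1, c2, hcosθ₀]
    linear_combination (Real.cos (θ₀ * (j.val:ℝ))) * hab
  have hwK : w ∈ K := by
    rw [hmemK]
    intro j
    have hsh := hshift Real.sin hpersin j
    show a * Real.sin (θ₀ * j.val) + b * w (j + 1) + b * w (j - 1) = 0
    rw [show w (j+1) = (fun k : Fin n => Real.sin (θ₀ * k.val)) (j + 1) from rfl, hsh.1,
      show w (j-1) = (fun k : Fin n => Real.sin (θ₀ * k.val)) (j - 1) from rfl, hsh.2]
    have c1 : Real.sin (θ₀ * ((j.val:ℝ) + 1)) =
        Real.sin (θ₀ * j.val) * Real.cos θ₀ + Real.cos (θ₀ * j.val) * Real.sin θ₀ := by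
      rw [show θ₀ * ((j.val:ℝ) + 1) = θ₀ * j.val + θ₀ by ring, Real.sin_add]
    have c2 : Real.sin (θ₀ * ((j.val:ℝ) - 1)) =
        Real.sin (θ₀ * j.val) * Real.cos θ₀ - Real.cos (θ₀ * j.val) * Real.sin θ₀ := by
      rw [show θ₀ * ((j.val:ℝ) - 1) = θ₀ * j.val - θ₀ by ring, Real.sin_sub]
    rw [c1, c2, hcosθ₀]
    linear_combination (Real.sin (θ₀ * (j.val:ℝ))) * hab
  -- values at 0 and 1
  have hv0 : v 0 = 1 := by
    show Real.cos (θ₀ * ((0 : Fin n).val : ℝ)) = 1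
    rw [Fin.val_zero]; norm_num
  have hw0 : w 0 = 0 := by
    show Real.sin (θ₀ * ((0 : Fin n).val : ℝ)) = 0
    rw [Fin.val_zero]; norm_num
  have hv1 : v 1 = -c := by
    show Real.cos (θ₀ * ((1 : Fin n).val : ℝ)) = -c
    rw [h1]; push_cast; rw [mul_one, hcosθ₀]
  have hw1 : w 1 = s := by
    show Real.sin (θ₀ * ((1 : Fin n).val : ℝ)) = s
    rw [h1]; push_cast; rw [mul_one, hθ₀, Real.sin_pi_sub]
  -- zero propagation: a kernel vector vanishing at 0 and 1 is zero
  have hzero : ∀ x : Fin n → ℝ, x ∈ K → x 0 = 0 → x 1 = 0 → x = 0 := by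
    intro x hx hx0 hx1
    have hrec := (hmemK x).mp hx
    have key : ∀ p : ℕ, ∀ hp : p < n, x ⟨p, hp⟩ = 0 := by
      intro p
      induction p using Nat.strong_induction_on with
      | _ p ih =>
        intro hp
        rcases p with _ | _ | p
        · have : (⟨0, hp⟩ : Fin n) = 0 := by ext; simp
          rw [this]; exact hx0
        · have : (⟨1, hp⟩ : Fin n) = 1 := by ext; rw [h1]
          rw [this]; exact hx1
        · 
          set j : Fin n := ⟨p + 1, by omega⟩ with hj
          have e1 : j + 1 = ⟨p + 2, hp⟩ := by
            ext
            rw [Fin.add_def, h1]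
            show (p + 1 + 1) % n = p + 2
            exact Nat.mod_eq_of_lt (by omega)
          have e2 : j - 1 = ⟨p, by omega⟩ := by
            ext
            rw [Fin.sub_def, h1]
            show (n - 1 + (p + 1)) % n = p
            have e : n - 1 + (p + 1) = n + p := by omega
            rw [e, Nat.add_mod_left]
            exact Nat.mod_eq_of_lt (by omega)
          have h := hrec j
          rw [e1, e2] at h
          have hxj : x j = 0 := ih (p + 1) (by omega) (by omega)
          have hxp : x ⟨p, by omega⟩ = 0 := ih p (by omega) (by omega)
          have : b * x ⟨p + 2, hp⟩ = 0 := by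
            rw [hxj, hxp] at h; linarith
          rcases mul_eq_zero.mp this with h' | h'
          · exact absurd h' hbne
          · exact h'
    funext j
    have := key j.val j.isLt
    simpa [Fin.eta] using this
  -- the kernel is the span of v and w
  have hspan : K = Submodule.span ℝ (Set.range ![v, w]) := by
    apply le_antisymm
    · intro x hx
      set α := x 0 with hα
      set β := (x 1 + c * x 0) / s with hβ
      have hvw : α • v + β • w ∈ K :=
        Submodule.add_mem _ (Submodule.smul_mem _ _ hvK) (Submodule.smul_mem _ _ hwK)
      have hy : x - (α • v + β • w) = 0 := by
        apply hzero _ (Submodule.sub_mem _ hx hvw)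
        · simp only [Pi.sub_apply, Pi.add_apply, Pi.smul_apply, smul_eq_mul, hv0, hw0]
          ring
        · simp only [Pi.sub_apply, Pi.add_apply, Pi.smul_apply, smul_eq_mul, hv1, hw1, hβ]
          field_simp
          ring
      have hxeq : x = α • v + β • w := by rwa [sub_eq_zero] at hy
      rw [hxeq]
      apply Submodule.add_mem
      · exact Submodule.smul_mem _ _ (Submodule.subset_span ⟨0, rfl⟩)
      · exact Submodule.smul_mem _ _ (Submodule.subset_span ⟨1, rfl⟩)
    · rw [Submodule.span_le]
      rintro y ⟨i, rfl⟩
      fin_cases i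
      · exact hvK
      · exact hwK
  have hindep : LinearIndependent ℝ ![v, w] := by
    rw [linearIndependent_fin2]
    constructor
    · intro h
      have := congrFun h 1
      simp only [Matrix.cons_val_one, Matrix.head_cons, Matrix.cons_val_zero, Pi.zero_apply] at this
      rw [hw1] at this
      exact hsne this
    · intro r h
      have := congrFun h 0
      simp only [Matrix.cons_val_one, Matrix.head_cons, Matrix.cons_val_zero,
        Pi.smul_apply, smul_eq_mul] at this
      rw [hw0, hv0] at this
      norm_num at this
  have hker2 : Module.finrank ℝ K = 2 := by
    rw [hspan, finrank_span_eq_card hindep]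
    simp
  have hrank := LinearMap.finrank_range_add_finrank_ker M.mulVecLin
  rw [Module.finrank_fin_fun, ← hK, hker2] at hrank
  have : M.rank = n - 2 := by
    rw [Matrix.rank]
    omega
  exact this
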